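/- Let γ > 0, b > 0, p > 0, p₂ ≥ p, and q_max > b + p/γ. Define G(q) = -γ/2·q² + (γb + p)q for 0 ≤ q ≤ b + p/γ and G(q) = p²/(2γ) + γb²/2 + pb otherwise. The maximizer of J(q) = G(q) - pq + p₂·max(b - q, 0) over [0, q_max] is q° = max(b - p₂/γ, 0). -/

import Mathlib

open Set

private lemma aux_ineq (γ b s t q : ℝ) (hγ : 0 < γ) (hb : 0 < b) (hs : 0 < s)
    (hst : s ≤ t) (hq0 : 0 ≤ q) :
    (if q ≤ b + s then -γ/2 * q^2 + (γ*b + γ*s) * q else (γ*s)*s/2 + γ*b^2/2 + (γ*s)*b)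
      - (γ*s)*q + (γ*t) * max (b - q) 0
    ≤ -γ/2 * (max (b - t) 0)^2 + (γ*b + γ*s) * (max (b - t) 0)
      - (γ*s)*(max (b - t) 0) + (γ*t) * max (b - max (b - t) 0) 0 := by
  have ht : 0 < t := lt_of_lt_of_le hs hst
  rcases le_total (b - t) 0 with hA | hA
  · rw [max_eq_right hA, max_eq_left (by linarith : (0:ℝ) ≤ b - 0)]
    rcases le_total (b - q) 0 with hB | hB
    · rw [max_eq_right hB]
      split_ifs with h
      · nlinarith [mul_nonneg hγ.le (sq_nonneg (q - b)), mul_nonneg (mul_nonneg hγ.le hb.le) (by linarith : (0:ℝ) ≤ t - b), mul_nonneg hγ.le (sq_nonneg b)]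
      · push_neg at h
        nlinarith [mul_nonneg (mul_nonneg hγ.le hs.le) (by linarith : (0:ℝ) ≤ q - (b + s)),
          mul_nonneg (mul_nonneg hγ.le hb.le) (by linarith : (0:ℝ) ≤ t - b),
          mul_nonneg hγ.le (sq_nonneg s)]
    · rw [max_eq_left hB, if_pos (by linarith)]
      nlinarith [mul_nonneg hq0 (mul_nonneg hγ.le (by linarith : (0:ℝ) ≤ t - b)),
        mul_nonneg hγ.le (sq_nonneg q)]
  · rw [max_eq_left hA, max_eq_left (by linarith : (0:ℝ) ≤ b - (b - t))]
    rcases le_total (b - q) 0 with hB | hB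
    · rw [max_eq_right hB]
      split_ifs with h
      · nlinarith [mul_nonneg hγ.le (sq_nonneg (q - b)), mul_nonneg hγ.le (sq_nonneg t)]
      · push_neg at h
        nlinarith [mul_nonneg (mul_nonneg hγ.le hs.le) (by linarith : (0:ℝ) ≤ q - (b + s)),
          mul_nonneg hγ.le (sq_nonneg t), mul_nonneg hγ.le (sq_nonneg s)]
    · rw [max_eq_left hB, if_pos (by linarith)]
      nlinarith [mul_nonneg hγ.le (sq_nonneg (q - (b - t)))]

/-- The maximizer of J(q) = G(q) - pq + p₂·max(b - q, 0) over [0, q_max]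
is q° = max(b - p₂/γ, 0). -/
theorem stmt1 (γ b p p₂ qmax : ℝ) (hγ : 0 < γ) (hb : 0 < b) (hp : 0 < p)
    (hp₂ : p ≤ p₂) (hqmax : b + p / γ < qmax)
    (G : ℝ → ℝ)
    (hG : ∀ q, G q = if q ≤ b + p / γ then -γ/2 * q^2 + (γ*b + p) * q
                     else p^2/(2*γ) + γ*b^2/2 + p*b) :
    IsMaxOn (fun q => G q - p*q + p₂ * max (b - q) 0) (Set.Icc 0 qmax)
      (max (b - p₂/γ) 0) := by
  have hγ0 : γ ≠ 0 := ne_of_gt hγ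
  have h1 : γ * (p / γ) = p := mul_div_cancel₀ _ hγ0
  have h2 : γ * (p₂ / γ) = p₂ := mul_div_cancel₀ _ hγ0
  have hpγpos : 0 < p / γ := div_pos hp hγ
  intro q hq
  simp only [Set.mem_Icc] at hq
  obtain ⟨hq0, hq1⟩ := hq
  simp only [Set.mem_setOf_eq]
  rw [hG, hG]
  have hcond : max (b - p₂/γ) 0 ≤ b + p / γ := by
    rcases le_total (b - p₂/γ) 0 with h | h
    · rw [max_eq_right h]; positivity
    · rw [max_eq_left h]
      have : 0 < p₂ / γ := div_pos (lt_of_lt_of_le hp hp₂) hγ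
      linarith
  rw [if_pos hcond]
  have H := aux_ineq γ b (p/γ) (p₂/γ) q hγ hb hpγpos
    (by gcongr) hq0
  rw [h1, h2] at H
  have h3 : p * (p/γ) / 2 = p^2/(2*γ) := by field_simp
  rw [h3] at H
  have h4 : p / γ ≤ p₂ / γ := by gcongr
  exact H
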